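/- Let R be the bivariate formal power series over ℚ in variables x and y whose coefficient of x^n y^k (for n ≥ 1, k ≥ 0) is the number of Catalan words of length n with exactly k runs of ascents, and whose coefficient of x^0 y^k is 0 for all k. Then R satisfies the functional equation R = x·y + x·(1+y)·R + x·R². -/

import Mathlib

/-- The set of Catalan words of length `n`: words `w` over ℕ with `w 1 = 0` and
`w (i+1) ≤ w i + 1` for all `i`. -/
def CatalanWord (n : ℕ) : Set (List ℕ) :=
  {w | w.length = n ∧ w.getD 0 0 = 0 ∧
    ∀ i, i + 1 < n → w.getD (i + 1) 0 ≤ w.getD i 0 + 1}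

/-- Number of runs of ascents of `w`: `1 + #{i : w i ≥ w (i+1)}`. -/
def ascRuns (w : List ℕ) : ℕ :=
  1 + ((Finset.range (w.length - 1)).filter
    (fun i => w.getD (i + 1) 0 ≤ w.getD i 0)).card

def dsc : List ℕ → ℕ
  | [] => 0
  | [_] => 0
  | a :: b :: t => (if b ≤ a then 1 else 0) + dsc (b :: t)

lemma ascRuns_eq (w : List ℕ) : ascRuns w = 1 + dsc w := by
  unfold ascRuns
  congr 1
  induction w with
  | nil => simp [dsc]
  | cons a t ih =>
    cases t with
    | nil => simp [dsc]
    | cons b s =>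
      rw [Finset.card_filter] at ih ⊢
      simp only [List.length_cons, Nat.add_sub_cancel, List.getD_cons_succ] at ih ⊢
      rw [Finset.sum_range_succ']
      simp only [List.getD_cons_succ, List.getD_cons_zero]
      rw [dsc, ih]
      omega

lemma dsc_map (l : List ℕ) : dsc (l.map (· + 1)) = dsc l := by
  induction l with
  | nil => rfl
  | cons a t ih =>
    cases t with
    | nil => rfl
    | cons b s =>
      simp only [List.map_cons, dsc] at ih ⊢
      rw [ih]
      simp [Nat.add_le_add_iff_right]

lemma dsc_cons (a : ℕ) {y : List ℕ} (hy : y ≠ []) :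
    dsc (a :: y) = (if y.getD 0 0 ≤ a then 1 else 0) + dsc y := by
  cases y with
  | nil => exact absurd rfl hy
  | cons b s => rfl

lemma dsc_append {x : List ℕ} (y : List ℕ) (hx : x ≠ []) (hy : y ≠ []) :
    dsc (x ++ y) = dsc x + (if y.getD 0 0 ≤ x.getLast hx then 1 else 0) + dsc y := by
  induction x with
  | nil => exact absurd rfl hx
  | cons a t ih =>
    cases t with
    | nil => rw [List.cons_append, List.nil_append, dsc_cons a hy]; simp [dsc]
    | cons b s =>
      have h1 : (b :: s) ≠ [] := by simp
      rw [List.cons_append, List.cons_append]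
      rw [show dsc (a :: b :: (s ++ y)) = (if b ≤ a then 1 else 0) + dsc (b :: (s ++ y)) from rfl]
      rw [← List.cons_append, ih h1, dsc]
      rw [List.getLast_cons h1]
      omega

def IsCat (w : List ℕ) : Prop := w.getD 0 0 = 0 ∧ w.IsChain (fun a b => b ≤ a + 1)

lemma mem_catalanWord_iff {w : List ℕ} {n : ℕ} :
    w ∈ CatalanWord n ↔ w.length = n ∧ IsCat w := by
  constructor
  · rintro ⟨hl, h0, hc⟩
    refine ⟨hl, h0, ?_⟩
    rw [List.isChain_iff_getElem]
    intro i hi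
    have h1 : i + 1 < w.length := by omega
    have := hc i (by omega)
    rwa [List.getD_eq_getElem _ _ h1, List.getD_eq_getElem _ _ (by omega)] at this
  · rintro ⟨hl, h0, hc⟩
    refine ⟨hl, h0, ?_⟩
    intro i hi
    rw [List.isChain_iff_getElem] at hc
    have h1 : i + 1 < w.length := by omega
    have := hc i (by omega)
    rw [List.getD_eq_getElem _ _ h1, List.getD_eq_getElem _ _ (by omega)]
    exact this

def Phi (u v : List ℕ) : List ℕ := 0 :: (u.map (· + 1) ++ v)

lemma head_eq_zero {v : List ℕ} (hv : v.getD 0 0 = 0) {y : ℕ} (hy : y ∈ v.head?) : y = 0 := by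
  cases v with
  | nil => simp at hy
  | cons a s => simp_all

lemma isCat_phi {u v : List ℕ} (hu : IsCat u) (hv : IsCat v) :
    Phi u v ∈ CatalanWord (u.length + v.length + 1) := by
  rw [mem_catalanWord_iff]
  refine ⟨by simp [Phi], rfl, ?_⟩
  simp only [Phi]
  rw [List.isChain_cons]
  constructor
  · intro y hy
    rcases u with _ | ⟨a, u'⟩
    · simp only [List.map_nil, List.nil_append] at hy
      have := head_eq_zero hv.1 hy
      omega
    · simp only [List.map_cons, List.cons_append, List.head?_cons, Option.mem_some_iff] at hy
      have : a = 0 := by simpa using hu.1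
      omega
  · rw [List.isChain_append]
    refine ⟨?_, hv.2, ?_⟩
    · rw [List.isChain_map]
      exact hu.2.imp (fun a b h => by omega)
    · intro x _ y hy
      have := head_eq_zero hv.1 hy
      omega

lemma dsc_phi {u v : List ℕ} (hu0 : u.getD 0 0 = 0) (hv0 : v.getD 0 0 = 0) :
    dsc (Phi u v) = dsc u + (if v = [] then 0 else 1 + dsc v) := by
  rcases u with _ | ⟨a, u'⟩
  · rcases v with _ | ⟨b, s⟩
    · simp [Phi, dsc]
    · have hb : b = 0 := by simpa using hv0
      simp only [Phi, List.map_nil, List.nil_append]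
      rw [dsc_cons 0 (by simp)]
      simp [hb, dsc]
  · have ha : a = 0 := by simpa using hu0
    have hkey : dsc (0 :: (a :: u').map (· + 1)) = dsc (a :: u') := by
      have h1 : dsc (0 :: (a :: u').map (· + 1))
          = (if (a + 1) ≤ 0 then 1 else 0) + dsc ((a :: u').map (· + 1)) := rfl
      rw [h1, dsc_map]
      simp
    rcases v with _ | ⟨b, s⟩
    · simpa [Phi] using hkey
    · have hb : b = 0 := by simpa using hv0
      have h2 : Phi (a :: u') (b :: s) = (0 :: (a :: u').map (· + 1)) ++ (b :: s) := by
        simp [Phi]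
      rw [h2, dsc_append _ (by simp) (by simp), hkey]
      simp [hb]
      omega

lemma dropWhile_head_zero : ∀ {t : List ℕ} {b : ℕ} {s : List ℕ},
    t.dropWhile (fun x => decide (x ≠ 0)) = b :: s → b = 0 := by
  intro t
  induction t with
  | nil => intro b s h; simp at h
  | cons a t ih =>
    intro b s h
    rw [List.dropWhile_cons] at h
    by_cases ha : a = 0
    · rw [if_neg (by simp [ha])] at h
      injection h with h1 h2
      omega
    · rw [if_pos (by simp [ha])] at h
      exact ih h

lemma phi_decomp {w : List ℕ} {n : ℕ} (hn : 1 ≤ n) (hw : w ∈ CatalanWord n) :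
    ∃ u v, IsCat u ∧ IsCat v ∧ u.length + v.length + 1 = n ∧ w = Phi u v := by
  rw [mem_catalanWord_iff] at hw
  obtain ⟨hl, h0, hc⟩ := hw
  rcases w with _ | ⟨c, t⟩
  · simp at hl; omega
  · have hc0 : c = 0 := by simpa using h0
    subst hc0
    set p := t.takeWhile (fun x => x ≠ 0) with hp
    set v := t.dropWhile (fun x => x ≠ 0) with hv
    have htpv : p ++ v = t := List.takeWhile_append_dropWhile
    have hchaint : t.IsChain (fun a b => b ≤ a + 1) := hc.tail
    have hchainp : p.IsChain (fun a b => b ≤ a + 1) := by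
      obtain ⟨suf, hsuf⟩ : ∃ suf, p ++ suf = t := ⟨v, htpv⟩
      rw [← hsuf] at hchaint
      exact (List.isChain_append.mp hchaint).1
    have hchainv : v.IsChain (fun a b => b ≤ a + 1) := by
      rw [← htpv] at hchaint
      exact (List.isChain_append.mp hchaint).2.1
    refine ⟨p.map (· - 1), v, ⟨?_, ?_⟩, ⟨?_, hchainv⟩, ?_, ?_⟩
    · -- head of u is 0
      rcases t with _ | ⟨y, t'⟩
      · simp [hp]
      · by_cases hy : y = 0
        · simp [hp, hy]
        · have hpy : p = y :: t'.takeWhile (fun x => x ≠ 0) := by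
            simp [hp, List.takeWhile_cons, hy]
          have hy1 : y ≤ 1 := by
            have := List.isChain_cons_cons.mp hc
            omega
          rw [hpy]
          simp
          omega
    · rw [List.isChain_map]
      exact hchainp.imp (fun a b h => by omega)
    · -- head of v is 0
      rcases hvv : v with _ | ⟨b, s⟩
      · simp
      · have hb : b = 0 := dropWhile_head_zero (hv.symm.trans hvv)
        simp [hvv, hb]
    · simp only [List.length_map]
      have : p.length + v.length = t.length := by rw [← htpv]; simp
      simp at hl
      omega
    · -- w = Phi u v
      have hmap : (p.map (· - 1)).map (· + 1) = p := by
        rw [List.map_map]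
        have : ∀ x ∈ p, (x - 1) + 1 = x := by
          intro x hx
          have := List.mem_takeWhile_imp hx
          simp at this
          omega
        calc p.map ((· + 1) ∘ (· - 1)) = p.map id := List.map_congr_left (fun a h => by simpa using this a h)
        _ = p := List.map_id p
      rw [Phi, hmap, htpv]
section
variable {u v u' v' : List ℕ}

lemma takeWhile_phi (u : List ℕ) {v : List ℕ} (hv : v.getD 0 0 = 0) :
    (u.map (· + 1) ++ v).takeWhile (fun x => decide (x ≠ 0)) = u.map (· + 1) := by
  induction u with
  | nil =>
    rcases v with _ | ⟨b, s⟩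
    · simp
    · have hb : b = 0 := by simpa using hv
      simp [hb, List.takeWhile_cons]
  | cons a t ih =>
    simp only [List.map_cons, List.cons_append, List.takeWhile_cons]
    rw [if_pos (by simp)]
    rw [ih]

lemma phi_inj (hv : v.getD 0 0 = 0) (hv' : v'.getD 0 0 = 0) (h : Phi u v = Phi u' v') :
    u = u' ∧ v = v' := by
  simp only [Phi, List.cons.injEq, true_and] at h
  have h1 : u.map (· + 1) = u'.map (· + 1) := by
    have := congrArg (List.takeWhile (fun x => decide (x ≠ 0))) h
    rwa [takeWhile_phi u hv, takeWhile_phi u' hv'] at this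
  have hu : u = u' := by
    exact List.map_injective_iff.mpr (add_left_injective 1) h1
  subst hu
  exact ⟨rfl, List.append_cancel_left h⟩

end

lemma finite_bdd (n B : ℕ) : {l : List ℕ | l.length = n ∧ ∀ x ∈ l, x < B}.Finite := by
  induction n with
  | zero =>
    apply Set.Finite.subset (Set.finite_singleton ([] : List ℕ))
    rintro l ⟨h, -⟩
    simpa using List.length_eq_zero_iff.mp h
  | succ n ih =>
    apply Set.Finite.subset (((Set.finite_Iio B).prod ih).image (fun p : ℕ × List ℕ => p.1 :: p.2))
    rintro l ⟨hl, hb⟩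
    rcases l with _ | ⟨a, t⟩
    · simp at hl
    · exact ⟨(a, t), ⟨hb a (by simp), by simpa using hl, fun x hx => hb x (by simp [hx])⟩, rfl⟩

lemma entry_bound {w : List ℕ} {n : ℕ} (hw : w ∈ CatalanWord n) : ∀ x ∈ w, x < n := by
  obtain ⟨hl, h0, hc⟩ := hw
  have key : ∀ i, i < n → w.getD i 0 ≤ i := by
    intro i
    induction i with
    | zero => intro _; exact le_of_eq h0
    | succ i ih =>
      intro hi
      have := hc i hi
      have := ih (by omega)
      omega
  intro x hx
  obtain ⟨i, hih, rfl⟩ := List.mem_iff_getElem.mp hx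
  have hi : i < n := hl ▸ hih
  have h2 := key i hi
  rw [List.getD_eq_getElem w 0 hih] at h2
  omega

lemma finite_cat (n k : ℕ) : {w : List ℕ | w ∈ CatalanWord n ∧ ascRuns w = k}.Finite := by
  apply Set.Finite.subset (finite_bdd n n)
  rintro w ⟨hw, -⟩
  exact ⟨hw.1, entry_bound hw⟩

noncomputable def CW (n k : ℕ) : Finset (List ℕ) :=
  if n = 0 then ∅ else (finite_cat n k).toFinset

lemma mem_CW {w : List ℕ} {n k : ℕ} (hn : n ≠ 0) :
    w ∈ CW n k ↔ w ∈ CatalanWord n ∧ ascRuns w = k := by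
  rw [CW, if_neg hn, Set.Finite.mem_toFinset]
  rfl

lemma CW_zero (k : ℕ) : CW 0 k = ∅ := by rw [CW, if_pos rfl]

lemma CW_runs_zero (n : ℕ) : CW n 0 = ∅ := by
  rcases Nat.eq_zero_or_pos n with h | h
  · subst h; exact CW_zero 0
  · ext w
    rw [mem_CW (by omega)]
    simp only [Finset.notMem_empty, iff_false]
    rintro ⟨-, hr⟩
    rw [ascRuns_eq] at hr
    omega

lemma card_CW (n k : ℕ) (hn : n ≠ 0) :
    Nat.card {w : List ℕ | w ∈ CatalanWord n ∧ ascRuns w = k} = (CW n k).card := by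
  rw [Nat.card_coe_set_eq, CW, if_neg hn,
    Set.ncard_eq_toFinset_card _ (finite_cat n k)]

lemma isCat_nil : IsCat [] := ⟨by simp, List.isChain_nil⟩

lemma mem_CW_elim {u : List ℕ} {m k : ℕ} (h : u ∈ CW m k) :
    IsCat u ∧ u.length = m ∧ ascRuns u = k ∧ u ≠ [] ∧ m ≠ 0 := by
  by_cases hm : m = 0
  · rw [hm, CW_zero] at h; simp at h
  · rw [mem_CW hm] at h
    obtain ⟨hc, hr⟩ := h
    rw [mem_catalanWord_iff] at hc
    refine ⟨hc.2, hc.1, hr, ?_, hm⟩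
    rintro rfl
    exact hm (hc.1.symm.trans rfl)

lemma mem_CW_intro {u : List ℕ} {m k : ℕ} (hm : m ≠ 0) (hc : IsCat u) (hl : u.length = m)
    (hr : ascRuns u = k) : u ∈ CW m k := by
  rw [mem_CW hm, mem_catalanWord_iff]
  exact ⟨⟨hl, hc⟩, hr⟩

noncomputable def pieceA (m k : ℕ) : Finset (List ℕ) :=
  if m = 0 ∧ k = 1 then {Phi [] []} else ∅
noncomputable def pieceB (m k : ℕ) : Finset (List ℕ) := (CW m k).image (fun u => Phi u [])
noncomputable def pieceC (m k : ℕ) : Finset (List ℕ) := (CW m (k-1)).image (fun v => Phi [] v)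
noncomputable def pieceD (m k : ℕ) : Finset (List ℕ) :=
  (Finset.HasAntidiagonal.antidiagonal m ×ˢ Finset.HasAntidiagonal.antidiagonal k).biUnion
    (fun x => ((CW x.1.1 x.2.1) ×ˢ (CW x.1.2 x.2.2)).image (fun p => Phi p.1 p.2))

lemma runs_phi {u v : List ℕ} (hu0 : u.getD 0 0 = 0) (hv0 : v.getD 0 0 = 0) :
    ascRuns (Phi u v) = 1 + dsc u + (if v = [] then 0 else 1 + dsc v) := by
  rw [ascRuns_eq, dsc_phi hu0 hv0]; omega

lemma master (m k : ℕ) :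
    CW (m + 1) k = (pieceA m k ∪ pieceB m k ∪ pieceC m k) ∪ pieceD m k := by
  ext w
  simp only [Finset.mem_union]
  rw [mem_CW (Nat.succ_ne_zero m)]
  constructor
  · rintro ⟨hw, hr⟩
    have hlenw := (mem_catalanWord_iff.mp hw).1
    obtain ⟨u, v, hu, hv, hlen, rfl⟩ := phi_decomp (by omega) hw
    rw [runs_phi hu.1 hv.1] at hr
    rcases eq_or_ne u [] with rfl | hune
    · rcases eq_or_ne v [] with rfl | hvne
      · left; left; left
        have hm : m = 0 := by simp at hlen; omega
        have hk : k = 1 := by simp [dsc] at hr; omega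
        simp [pieceA, hm, hk]
      · left; right
        rw [if_neg hvne] at hr
        have hm : m ≠ 0 := by
          rcases v with _ | ⟨b, s⟩
          · exact absurd rfl hvne
          · simp at hlen; omega
        refine Finset.mem_image.mpr ⟨v, mem_CW_intro hm hv ?_ ?_, rfl⟩
        · simp at hlen; omega
        · rw [ascRuns_eq]; simp [dsc] at hr; omega
    · rcases eq_or_ne v [] with rfl | hvne
      · left; left; right
        rw [if_pos rfl] at hr
        have hm : m ≠ 0 := by
          rcases u with _ | ⟨a, t⟩
          · exact absurd rfl hune
          · simp at hlen; omega
        refine Finset.mem_image.mpr ⟨u, mem_CW_intro hm hu ?_ ?_, rfl⟩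
        · simp at hlen; omega
        · rw [ascRuns_eq]; omega
      · right
        rw [if_neg hvne] at hr
        apply Finset.mem_biUnion.mpr
        refine ⟨((u.length, v.length), (ascRuns u, ascRuns v)), ?_, ?_⟩
        · simp only [Finset.mem_product, Finset.HasAntidiagonal.mem_antidiagonal]
          constructor
          · omega
          · rw [ascRuns_eq, ascRuns_eq]; omega
        · apply Finset.mem_image.mpr
          refine ⟨(u, v), ?_, rfl⟩
          rw [Finset.mem_product]
          have hul : u.length ≠ 0 := by simpa using hune
          have hvl : v.length ≠ 0 := by simpa using hvne
          exact ⟨mem_CW_intro hul hu rfl rfl, mem_CW_intro hvl hv rfl rfl⟩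
  · intro hmem
    rcases hmem with ((hA | hB) | hC) | hD
    · rw [pieceA] at hA
      split_ifs at hA with hcond
      · simp only [Finset.mem_singleton] at hA
        subst hA
        obtain ⟨hm, hk⟩ := hcond
        subst hm; subst hk
        exact ⟨isCat_phi isCat_nil isCat_nil, by rw [runs_phi isCat_nil.1 isCat_nil.1]; simp [dsc]⟩
      · simp at hA
    · obtain ⟨u, hu, rfl⟩ := Finset.mem_image.mp hB
      obtain ⟨hc, hl, hr, hne, hm⟩ := mem_CW_elim hu
      constructor
      · have := isCat_phi hc isCat_nil
        simpa [hl] using this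
      · rw [runs_phi hc.1 isCat_nil.1, if_pos rfl, ← ascRuns_eq]
        omega
    · obtain ⟨v, hv, rfl⟩ := Finset.mem_image.mp hC
      obtain ⟨hc, hl, hr, hne, hm⟩ := mem_CW_elim hv
      have hk1 : ascRuns v ≥ 1 := by rw [ascRuns_eq]; omega
      constructor
      · have := isCat_phi isCat_nil hc
        simpa [hl] using this
      · rw [runs_phi isCat_nil.1 hc.1, if_neg hne]
        rw [ascRuns_eq] at hr
        simp [dsc]
        omega
    · obtain ⟨x, hx, hw⟩ := Finset.mem_biUnion.mp hD
      obtain ⟨p, hp, rfl⟩ := Finset.mem_image.mp hw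
      rw [Finset.mem_product] at hp
      simp only [Finset.mem_product, Finset.HasAntidiagonal.mem_antidiagonal] at hx
      obtain ⟨hc1, hl1, hr1, hne1, -⟩ := mem_CW_elim hp.1
      obtain ⟨hc2, hl2, hr2, hne2, -⟩ := mem_CW_elim hp.2
      constructor
      · have := isCat_phi hc1 hc2
        rw [hl1, hl2, hx.1] at this
        exact this
      · rw [runs_phi hc1.1 hc2.1, if_neg hne2]
        rw [ascRuns_eq] at hr1 hr2
        omega

lemma card_CW_succ (m k : ℕ) :
    (CW (m + 1) k).card
      = (if m = 0 ∧ k = 1 then 1 else 0) + (CW m k).card + (CW m (k - 1)).card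
        + ∑ ab ∈ Finset.HasAntidiagonal.antidiagonal m, ∑ jl ∈ Finset.HasAntidiagonal.antidiagonal k,
            (CW ab.1 jl.1).card * (CW ab.2 jl.2).card := by
  have hnil : (([] : List ℕ)).getD 0 0 = 0 := by simp
  have hmemA : ∀ w ∈ pieceA m k, w = Phi [] [] := by
    intro w hw; rw [pieceA] at hw; split_ifs at hw
    · simpa using hw
    · simp at hw
  have hmemB : ∀ w ∈ pieceB m k, ∃ u, u ≠ [] ∧ w = Phi u [] := by
    intro w hw; obtain ⟨u, hu, rfl⟩ := Finset.mem_image.mp hw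
    exact ⟨u, (mem_CW_elim hu).2.2.2.1, rfl⟩
  have hmemC : ∀ w ∈ pieceC m k, ∃ v, v ≠ [] ∧ v.getD 0 0 = 0 ∧ w = Phi [] v := by
    intro w hw; obtain ⟨v, hv, rfl⟩ := Finset.mem_image.mp hw
    exact ⟨v, (mem_CW_elim hv).2.2.2.1, (mem_CW_elim hv).1.1, rfl⟩
  have hmemD : ∀ w ∈ pieceD m k, ∃ u v, u ≠ [] ∧ v ≠ [] ∧ v.getD 0 0 = 0 ∧ w = Phi u v := by
    intro w hw
    obtain ⟨x, -, hw2⟩ := Finset.mem_biUnion.mp hw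
    obtain ⟨p, hp, rfl⟩ := Finset.mem_image.mp hw2
    rw [Finset.mem_product] at hp
    exact ⟨p.1, p.2, (mem_CW_elim hp.1).2.2.2.1, (mem_CW_elim hp.2).2.2.2.1,
      (mem_CW_elim hp.2).1.1, rfl⟩
  have dAB : Disjoint (pieceA m k) (pieceB m k) := by
    rw [Finset.disjoint_left]; intro w hwa hwb
    obtain ⟨u, hune, huw⟩ := hmemB w hwb
    exact hune ((phi_inj hnil hnil ((hmemA w hwa).symm.trans huw)).1).symm
  have dAC : Disjoint (pieceA m k) (pieceC m k) := by
    rw [Finset.disjoint_left]; intro w hwa hwb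
    obtain ⟨v, hvne, hv0, hvw⟩ := hmemC w hwb
    exact hvne ((phi_inj hnil hv0 ((hmemA w hwa).symm.trans hvw)).2).symm
  have dAD : Disjoint (pieceA m k) (pieceD m k) := by
    rw [Finset.disjoint_left]; intro w hwa hwb
    obtain ⟨u, v, hune, hvne, hv0, hvw⟩ := hmemD w hwb
    exact hune ((phi_inj hnil hv0 ((hmemA w hwa).symm.trans hvw)).1).symm
  have dBC : Disjoint (pieceB m k) (pieceC m k) := by
    rw [Finset.disjoint_left]; intro w hwb hwc
    obtain ⟨u, hune, huw⟩ := hmemB w hwb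
    obtain ⟨v, hvne, hv0, hvw⟩ := hmemC w hwc
    exact hune (phi_inj hnil hv0 (huw.symm.trans hvw)).1
  have dBD : Disjoint (pieceB m k) (pieceD m k) := by
    rw [Finset.disjoint_left]; intro w hwb hwd
    obtain ⟨u, hune, huw⟩ := hmemB w hwb
    obtain ⟨u', v', hune', hvne', hv0', hvw'⟩ := hmemD w hwd
    exact hvne' ((phi_inj hnil hv0' (huw.symm.trans hvw')).2).symm
  have dCD : Disjoint (pieceC m k) (pieceD m k) := by
    rw [Finset.disjoint_left]; intro w hwc hwd
    obtain ⟨v, hvne, hv0, hvw⟩ := hmemC w hwc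
    obtain ⟨u', v', hune', hvne', hv0', hvw'⟩ := hmemD w hwd
    exact hune' ((phi_inj hv0 hv0' (hvw.symm.trans hvw')).1).symm
  have cA : (pieceA m k).card = if m = 0 ∧ k = 1 then 1 else 0 := by
    rw [pieceA]; split_ifs <;> simp
  have cB : (pieceB m k).card = (CW m k).card :=
    Finset.card_image_of_injective _ (fun u u' h => (phi_inj hnil hnil h).1)
  have cC : (pieceC m k).card = (CW m (k - 1)).card := by
    apply Finset.card_image_of_injOn
    intro v hv v' hv' h
    exact (phi_inj (mem_CW_elim hv).1.1 (mem_CW_elim hv').1.1 h).2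
  have cD : (pieceD m k).card
      = ∑ ab ∈ Finset.HasAntidiagonal.antidiagonal m, ∑ jl ∈ Finset.HasAntidiagonal.antidiagonal k,
          (CW ab.1 jl.1).card * (CW ab.2 jl.2).card := by
    rw [pieceD, Finset.card_biUnion]
    · rw [← Finset.sum_product']
      apply Finset.sum_congr rfl
      intro x hx
      rw [Finset.card_image_of_injOn, Finset.card_product]
      intro p hp q hq hpq
      rw [Finset.mem_coe, Finset.mem_product] at hp hq
      have h1 := phi_inj (mem_CW_elim hp.2).1.1 (mem_CW_elim hq.2).1.1 hpq
      exact Prod.ext h1.1 h1.2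
    · intro x hx y hy hxy
      rw [Function.onFun, Finset.disjoint_left]
      intro w hwx hwy
      obtain ⟨p, hp, rfl⟩ := Finset.mem_image.mp hwx
      obtain ⟨q, hq, hqw⟩ := Finset.mem_image.mp hwy
      rw [Finset.mem_product] at hp hq
      have h1 := phi_inj (mem_CW_elim hp.2).1.1 (mem_CW_elim hq.2).1.1 hqw.symm
      obtain ⟨e1, e2⟩ := h1
      apply hxy
      have a1 := (mem_CW_elim hp.1).2.1
      have a2 := (mem_CW_elim hp.1).2.2.1
      have b1 := (mem_CW_elim hp.2).2.1
      have b2 := (mem_CW_elim hp.2).2.2.1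
      have a1' := (mem_CW_elim hq.1).2.1
      have a2' := (mem_CW_elim hq.1).2.2.1
      have b1' := (mem_CW_elim hq.2).2.1
      have b2' := (mem_CW_elim hq.2).2.2.1
      have : x = ((p.1.length, p.2.length), (ascRuns p.1, ascRuns p.2)) := by
        rw [a1, a2, b1, b2]
      have hy2 : y = ((q.1.length, q.2.length), (ascRuns q.1, ascRuns q.2)) := by
        rw [a1', a2', b1', b2']
      rw [this, hy2, e1, e2]
  rw [master, Finset.card_union_of_disjoint, Finset.card_union_of_disjoint,
    Finset.card_union_of_disjoint dAB, cA, cB, cC, cD]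
  · rw [Finset.disjoint_union_left]; exact ⟨dAC, dBC⟩
  · rw [Finset.disjoint_union_left, Finset.disjoint_union_left]
    exact ⟨⟨dAD, dBD⟩, dCD⟩

lemma fin2_ext {f g : Fin 2 →₀ ℕ} (h0 : f 0 = g 0) (h1 : f 1 = g 1) : f = g := by
  ext i
  fin_cases i
  · exact h0
  · exact h1

lemma fin2_decomp (d : Fin 2 →₀ ℕ) :
    d = Finsupp.single 0 (d 0) + Finsupp.single 1 (d 1) := by
  apply fin2_ext <;> simp [Finsupp.single_apply]

lemma coeff_X_mul' (s : Fin 2) (φ : MvPowerSeries (Fin 2) ℚ) (d : Fin 2 →₀ ℕ) :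
    MvPowerSeries.coeff d (MvPowerSeries.X s * φ)
      = if Finsupp.single s 1 ≤ d
          then MvPowerSeries.coeff (d - Finsupp.single s 1) φ else 0 := by
  rw [MvPowerSeries.X_def, MvPowerSeries.coeff_monomial_mul]
  simp only [one_mul]


/-- The bivariate generating function `R(x,y)` of nonempty Catalan words by length and
number of runs of ascents satisfies `R = xy + x(1+y)R + xR²`. -/
theorem ascRuns_gf_equation (F : MvPowerSeries (Fin 2) ℚ)
    (h0 : ∀ k : ℕ, MvPowerSeries.coeff (Finsupp.single 1 k) F = 0)
    (h : ∀ n k : ℕ, 1 ≤ n →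
      MvPowerSeries.coeff (Finsupp.single 0 n + Finsupp.single 1 k) F =
        Nat.card {w : List ℕ | w ∈ CatalanWord n ∧ ascRuns w = k}) :
    F = MvPowerSeries.X 0 * MvPowerSeries.X 1
      + MvPowerSeries.X 0 * (1 + MvPowerSeries.X 1) * F
      + MvPowerSeries.X 0 * F ^ 2 := by
  classical
  have hE : ∀ n k : ℕ,
      MvPowerSeries.coeff (Finsupp.single 0 n + Finsupp.single 1 k) F
        = ((CW n k).card : ℚ) := by
    intro n k
    rcases Nat.eq_zero_or_pos n with rfl | hn
    · rw [CW_zero]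
      simp only [Finsupp.single_zero, zero_add, Finset.card_empty, Nat.cast_zero]
      exact h0 k
    · rw [h n k hn, ← card_CW n k (by omega)]
  have hsplit : MvPowerSeries.X 0 * (1 + MvPowerSeries.X 1) * F
      = MvPowerSeries.X 0 * F + MvPowerSeries.X 0 * (MvPowerSeries.X 1 * F) := by ring
  have hsq : (MvPowerSeries.X 0 : MvPowerSeries (Fin 2) ℚ) * F ^ 2
      = MvPowerSeries.X 0 * (F * F) := by ring
  rw [hsplit, hsq]
  apply MvPowerSeries.ext
  intro d
  rw [map_add, map_add, map_add]
  have hd := fin2_decomp d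
  rcases Nat.eq_zero_or_pos (d 0) with hn0 | hn1
  · -- n = 0 case
    have hns : ¬ (Finsupp.single (0 : Fin 2) 1 ≤ d) := by
      rw [Finsupp.single_le_iff]
      omega
    rw [coeff_X_mul' 0 (MvPowerSeries.X 1) d, if_neg hns,
      coeff_X_mul' 0 F d, if_neg hns,
      coeff_X_mul' 0 (MvPowerSeries.X 1 * F) d, if_neg hns,
      coeff_X_mul' 0 (F * F) d, if_neg hns]
    rw [hn0, Finsupp.single_zero, zero_add] at hd
    rw [hd, h0 (d 1)]
    ring
  · -- n = m + 1 case
    obtain ⟨m, k, hdm⟩ : ∃ m k, d = Finsupp.single 0 (m + 1) + Finsupp.single 1 k :=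
      ⟨d 0 - 1, d 1, fin2_ext (by simp [Finsupp.single_apply]; omega)
        (by simp [Finsupp.single_apply])⟩
    have hle : Finsupp.single (0 : Fin 2) 1 ≤ d := by
      rw [Finsupp.single_le_iff]; omega
    have hsub : d - Finsupp.single 0 1 = Finsupp.single 0 m + Finsupp.single 1 k := by
      apply fin2_ext <;>
        simp [hdm, Finsupp.single_apply, Finsupp.tsub_apply]
    -- term 1 : X0 * X1
    have ht1 : MvPowerSeries.coeff d (MvPowerSeries.X 0 * MvPowerSeries.X 1)
        = if m = 0 ∧ k = 1 then (1 : ℚ) else 0 := by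
      rw [coeff_X_mul' 0 (MvPowerSeries.X 1) d, if_pos hle, hsub, MvPowerSeries.coeff_X]
      congr 1
      simp only [eq_iff_iff]
      constructor
      · intro he
        have e0 := congrFun (congrArg (fun f : Fin 2 →₀ ℕ => (f : Fin 2 → ℕ)) he) 0
        have e1 := congrFun (congrArg (fun f : Fin 2 →₀ ℕ => (f : Fin 2 → ℕ)) he) 1
        simp [Finsupp.single_apply] at e0 e1
        exact ⟨e0, e1⟩
      · rintro ⟨h1, h2⟩
        rw [h1, h2]
        apply fin2_ext <;> simp [Finsupp.single_apply]
    -- term 2 : X0 * F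
    have ht2 : MvPowerSeries.coeff d (MvPowerSeries.X 0 * F) = ((CW m k).card : ℚ) := by
      rw [coeff_X_mul' 0 F d, if_pos hle, hsub, hE]
    -- term 3 : X0 * (X1 * F)
    have ht3 : MvPowerSeries.coeff d (MvPowerSeries.X 0 * (MvPowerSeries.X 1 * F))
        = ((CW m (k - 1)).card : ℚ) := by
      rw [coeff_X_mul' 0 (MvPowerSeries.X 1 * F) d, if_pos hle, hsub,
        coeff_X_mul' 1 F (Finsupp.single 0 m + Finsupp.single 1 k)]
      rcases Nat.eq_zero_or_pos k with rfl | hkpos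
      · rw [if_neg, CW_runs_zero]
        · simp
        · rw [Finsupp.single_le_iff]
          simp [Finsupp.single_apply]
      · rw [if_pos, show (Finsupp.single (0:Fin 2) m + Finsupp.single 1 k) - Finsupp.single 1 1
            = Finsupp.single 0 m + Finsupp.single 1 (k - 1) from ?_, hE]
        · apply fin2_ext <;> simp [Finsupp.single_apply, Finsupp.tsub_apply]
        · rw [Finsupp.single_le_iff]
          simp [Finsupp.single_apply]
          omega
    -- term 4 : X0 * (F * F)
    have ht4 : MvPowerSeries.coeff d (MvPowerSeries.X 0 * (F * F))
        = ∑ ab ∈ Finset.HasAntidiagonal.antidiagonal m, ∑ jl ∈ Finset.HasAntidiagonal.antidiagonal k,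
            ((CW ab.1 jl.1).card : ℚ) * ((CW ab.2 jl.2).card : ℚ) := by
      rw [coeff_X_mul' 0 (F * F) d, if_pos hle, hsub, MvPowerSeries.coeff_mul]
      rw [← Finset.sum_product']
      apply Finset.sum_nbij' (i := fun p : (Fin 2 →₀ ℕ) × (Fin 2 →₀ ℕ) =>
          ((p.1 0, p.2 0), (p.1 1, p.2 1)))
        (j := fun y : (ℕ × ℕ) × (ℕ × ℕ) =>
          (Finsupp.single 0 y.1.1 + Finsupp.single 1 y.2.1,
           Finsupp.single 0 y.1.2 + Finsupp.single 1 y.2.2))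
      · intro p hp
        rw [Finset.HasAntidiagonal.mem_antidiagonal] at hp
        have e0 := congrFun (congrArg (fun f : Fin 2 →₀ ℕ => (f : Fin 2 → ℕ)) hp) 0
        have e1 := congrFun (congrArg (fun f : Fin 2 →₀ ℕ => (f : Fin 2 → ℕ)) hp) 1
        simp [Finsupp.single_apply] at e0 e1
        simp only [Finset.mem_product, Finset.HasAntidiagonal.mem_antidiagonal]
        exact ⟨e0, e1⟩
      · intro y hy
        simp only [Finset.mem_product, Finset.HasAntidiagonal.mem_antidiagonal] at hy
        rw [Finset.HasAntidiagonal.mem_antidiagonal]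
        apply fin2_ext <;> simp [Finsupp.single_apply] <;> omega
      · intro p hp
        apply Prod.ext <;> exact (fin2_decomp _).symm
      · intro y hy
        simp [Finsupp.single_apply]
      · intro p hp
        have e1 := hE (p.1 0) (p.1 1)
        have e2 := hE (p.2 0) (p.2 1)
        rw [← fin2_decomp p.1] at e1
        rw [← fin2_decomp p.2] at e2
        rw [e1, e2]
    rw [ht1, ht2, ht3, ht4, hdm, hE, card_CW_succ m k]
    push_cast
    ring
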